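/- If θ ∈ ℝ and i, j are distinct vertices of G such that the rational function λ_{i∼j} has a pole at θ (λ_{i∼j}(θ) = −∞), then i ∈ ∞_{θ,G∖j} and j ∈ ∞_{θ,G∖i}; that is, m_θ(G∖{i,j}) = m_θ(G∖j) + 1 and m_θ(G∖{i,j}) = m_θ(G∖i) + 1. -/

import Mathlib

open Polynomial
open scoped Classical

/-- A matching of the weighted graph with edge weights `lam`, inside the vertex set `A`:
a set of pairs `(j,k)` with `j < k`, `lam j k ≠ 0`, endpoints in `A`,
no two pairs sharing a vertex. -/
def IsMatching {n : ℕ} (lam : Fin n → Fin n → ℝ) (A : Finset (Fin n))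
    (M : Finset (Fin n × Fin n)) : Prop :=
  (∀ e ∈ M, e.1 < e.2 ∧ lam e.1 e.2 ≠ 0 ∧ e.1 ∈ A ∧ e.2 ∈ A) ∧
  ∀ e ∈ M, ∀ f ∈ M, e ≠ f → e.1 ≠ f.1 ∧ e.1 ≠ f.2 ∧ e.2 ≠ f.1 ∧ e.2 ≠ f.2

/-- The vertices covered by a matching. -/
def mVerts {n : ℕ} (M : Finset (Fin n × Fin n)) : Finset (Fin n) :=
  M.image Prod.fst ∪ M.image Prod.snd

/-- The finite set of matchings inside the vertex set `A`. -/
noncomputable def matchings {n : ℕ} (lam : Fin n → Fin n → ℝ) (A : Finset (Fin n)) :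
    Finset (Finset (Fin n × Fin n)) :=
  Finset.univ.filter fun M => IsMatching lam A M

/-- The weighted matching polynomial of the induced weighted subgraph on the vertex set `A`
(the matching polynomial of the empty graph is `1`). -/
noncomputable def mu {n : ℕ} (r : Fin n → ℝ) (lam : Fin n → Fin n → ℝ)
    (A : Finset (Fin n)) : Polynomial ℝ :=
  ∑ M ∈ matchings lam A,
    (∏ i ∈ A \ mVerts M, (X - C (r i))) * C (∏ e ∈ M, lam e.1 e.2)

/-- The multivariate matching polynomial evaluated at the complex numbers `x 1, …, x n`. -/
noncomputable def muC {n : ℕ} (lam : Fin n → Fin n → ℝ) (x : Fin n → ℂ) : ℂ :=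
  ∑ M ∈ matchings lam (Finset.univ : Finset (Fin n)),
    (∏ i ∈ Finset.univ \ mVerts M, x i) * ∏ e ∈ M, (lam e.1 e.2 : ℂ)

/-- The constant `B_G`: for `n ≥ 3` the maximum over vertices `j` and sets
`A ⊆ [n] ∖ {j}` with `|A| = n - 2` of `∑_{k ∈ A} (-λ_{jk})`; `-λ_{12}/4` for `n = 2`;
`0` for `n = 1`. -/
noncomputable def BG (n : ℕ) (lam : Fin n → Fin n → ℝ) : ℝ :=
  if 3 ≤ n then
    sSup {S : ℝ | ∃ j : Fin n, ∃ A : Finset (Fin n),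
      j ∉ A ∧ A.card = n - 2 ∧ S = ∑ k ∈ A, -lam j k}
  else if h : n = 2 then -lam ⟨0, by omega⟩ ⟨1, by omega⟩ / 4
  else 0

/-- `l` is a path from `i` to `j` inside the vertex set `A`: a nonempty list of distinct
vertices of `A`, starting at `i`, ending at `j`, with consecutive vertices joined by
edges of nonzero weight. -/
def IsPathIn {n : ℕ} (lam : Fin n → Fin n → ℝ) (A : Finset (Fin n)) (i j : Fin n)
    (l : List (Fin n)) : Prop :=
  l ≠ [] ∧ l.Nodup ∧ (∀ v ∈ l, v ∈ A) ∧ l.head? = some i ∧ l.getLast? = some j ∧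
    l.Chain' fun u v => lam u v ≠ 0

/-- `λ_c`: the product of `-λ_e` over the edges `e` of the path `c` (equal to `1` for a
trivial path). -/
def pathWeight {n : ℕ} (lam : Fin n → Fin n → ℝ) (l : List (Fin n)) : ℝ :=
  ((l.zip l.tail).map fun p => -lam p.1 p.2).prod

/-- A real polynomial viewed as a rational function. -/
noncomputable def toRF (p : Polynomial ℝ) : RatFunc ℝ :=
  algebraMap (Polynomial ℝ) (RatFunc ℝ) p

/-- The graph continued fraction `α_v = μ(A)/μ(A ∖ v)` as a rational function. -/
noncomputable def alpha {n : ℕ} (r : Fin n → ℝ) (lam : Fin n → Fin n → ℝ) (v : Fin n)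
    (A : Finset (Fin n)) : RatFunc ℝ :=
  toRF (mu r lam A) / toRF (mu r lam (A.erase v))

/-- `λ_{i∼j} = -(∑_{c ∈ [i→j]} λ_c · μ(A∖c)²) / μ(A∖{i,j})²` as a rational function. -/
noncomputable def lamSim {n : ℕ} (r : Fin n → ℝ) (lam : Fin n → Fin n → ℝ) (i j : Fin n)
    (A : Finset (Fin n)) : RatFunc ℝ :=
  -(∑ᶠ l ∈ {l : List (Fin n) | IsPathIn lam A i j l},
      toRF (C (pathWeight lam l) * mu r lam (A \ l.toFinset) ^ 2)) /
    toRF (mu r lam ((A.erase i).erase j)) ^ 2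

/-- The value of a rational function at `θ`, taken after cancelling common factors;
`none` encodes the value `∞` (a pole). -/
noncomputable def valAt (f : RatFunc ℝ) (θ : ℝ) : Option ℝ :=
  if f.denom.eval θ = 0 then none else some (f.num.eval θ / f.denom.eval θ)

/-- The set `0_{θ,A}` of θ-essential vertices: `m_θ(A∖v) = m_θ(A) - 1`. -/
def zeroSet {n : ℕ} (r : Fin n → ℝ) (lam : Fin n → Fin n → ℝ) (θ : ℝ)
    (A : Finset (Fin n)) : Set (Fin n) :=
  {v | v ∈ A ∧
    (mu r lam A).rootMultiplicity θ = (mu r lam (A.erase v)).rootMultiplicity θ + 1}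

/-- The set `∞_{θ,A}`: `m_θ(A∖v) = m_θ(A) + 1`. -/
def infSet {n : ℕ} (r : Fin n → ℝ) (lam : Fin n → Fin n → ℝ) (θ : ℝ)
    (A : Finset (Fin n)) : Set (Fin n) :=
  {v | v ∈ A ∧
    (mu r lam (A.erase v)).rootMultiplicity θ = (mu r lam A).rootMultiplicity θ + 1}

/-- The set `+_{θ,A}`: `m_θ(A∖v) = m_θ(A)` and `α_v(A)(θ) > 0`. -/
def plusSet {n : ℕ} (r : Fin n → ℝ) (lam : Fin n → Fin n → ℝ) (θ : ℝ)
    (A : Finset (Fin n)) : Set (Fin n) :=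
  {v | v ∈ A ∧
    (mu r lam (A.erase v)).rootMultiplicity θ = (mu r lam A).rootMultiplicity θ ∧
    ∃ t : ℝ, valAt (alpha r lam v A) θ = some t ∧ 0 < t}

/-- The set `−_{θ,A}`: `m_θ(A∖v) = m_θ(A)` and `α_v(A)(θ) < 0`. -/
def minusSet {n : ℕ} (r : Fin n → ℝ) (lam : Fin n → Fin n → ℝ) (θ : ℝ)
    (A : Finset (Fin n)) : Set (Fin n) :=
  {v | v ∈ A ∧
    (mu r lam (A.erase v)).rootMultiplicity θ = (mu r lam A).rootMultiplicity θ ∧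
    ∃ t : ℝ, valAt (alpha r lam v A) θ = some t ∧ t < 0}

/-- The frontier `∂0_{θ,A}`: vertices not in `0_{θ,A}` with a neighbor in `0_{θ,A}`. -/
def frontierZero {n : ℕ} (r : Fin n → ℝ) (lam : Fin n → Fin n → ℝ) (θ : ℝ)
    (A : Finset (Fin n)) : Set (Fin n) :=
  {v | v ∈ A ∧ v ∉ zeroSet r lam θ A ∧ ∃ w ∈ zeroSet r lam θ A, lam v w ≠ 0}

/-- The underlying simple graph: edges are the pairs with nonzero edge weight. -/
def wGraph {n : ℕ} (lam : Fin n → Fin n → ℝ) : SimpleGraph (Fin n) :=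
  SimpleGraph.fromRel fun j k => lam j k ≠ 0

section Dev
variable {n : ℕ} (r : Fin n → ℝ) (lam : Fin n → Fin n → ℝ)

-- ===== basic =====
lemma empty_mem_matchings (A : Finset (Fin n)) : (∅ : Finset (Fin n × Fin n)) ∈ matchings lam A := by
  simp [matchings, IsMatching]

lemma mem_matchings {A : Finset (Fin n)} {M : Finset (Fin n × Fin n)} :
    M ∈ matchings lam A ↔ IsMatching lam A M := by simp [matchings]

lemma mu_monic (A : Finset (Fin n)) : (mu r lam A).Monic := by
  have h0 := empty_mem_matchings lam A
  have hsplit : mu r lam A = (∏ i ∈ A, (X - C (r i)))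
      + ∑ M ∈ (matchings lam A).erase ∅,
        (∏ i ∈ A \ mVerts M, (X - C (r i))) * C (∏ e ∈ M, lam e.1 e.2) := by
    rw [mu, ← Finset.sum_erase_add _ _ h0]
    simp [mVerts, add_comm]
  rw [hsplit]
  have hp : (∏ i ∈ A, (X - C (r i))).Monic :=
    monic_prod_of_monic _ _ fun i _ => monic_X_sub_C _
  refine hp.add_of_left ?_
  have hdeg : ∀ B : Finset (Fin n), (∏ i ∈ B, (X - C (r i))).degree = (B.card : WithBot ℕ) := by
    intro B
    rw [degree_prod]
    simp [degree_X_sub_C]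
  rw [hdeg A]
  refine lt_of_le_of_lt (degree_sum_le _ _) ?_
  rw [Finset.sup_lt_iff (by exact WithBot.bot_lt_coe _)]
  intro M hM
  obtain ⟨hMne, hMm⟩ := Finset.mem_erase.mp hM
  have hM' : IsMatching lam A M := (mem_matchings lam).mp hMm
  obtain ⟨e, he⟩ := Finset.nonempty_iff_ne_empty.mpr hMne
  have he1A : e.1 ∈ A := (hM'.1 e he).2.2.1
  have he1m : e.1 ∈ mVerts M :=
    Finset.mem_union.mpr (Or.inl (Finset.mem_image.mpr ⟨e, he, rfl⟩))
  have hlt : (A \ mVerts M).card < A.card := by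
    refine Finset.card_lt_card ?_
    refine (Finset.ssubset_iff_of_subset Finset.sdiff_subset).mpr ⟨e.1, he1A, ?_⟩
    simp [he1m]
  calc ((∏ i ∈ A \ mVerts M, (X - C (r i))) * C (∏ e ∈ M, lam e.1 e.2)).degree
      ≤ _ + _ := degree_mul_le _ _
    _ ≤ ((A \ mVerts M).card : WithBot ℕ) + 0 := add_le_add (le_of_eq (hdeg _)) degree_C_le
    _ = ((A \ mVerts M).card : WithBot ℕ) := by rw [add_zero]
    _ < (A.card : WithBot ℕ) := by exact_mod_cast hlt

lemma mu_ne_zero (A : Finset (Fin n)) : mu r lam A ≠ 0 := (mu_monic r lam A).ne_zero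

-- ===== paths: membership =====
noncomputable def nodupLists (n : ℕ) : Finset (List (Fin n)) :=
  ((List.finRange n).sublists.flatMap List.permutations).toFinset

lemma mem_nodupLists {l : List (Fin n)} (hl : l.Nodup) : l ∈ nodupLists n := by
  rw [nodupLists, List.mem_toFinset, List.mem_flatMap]
  refine ⟨(List.finRange n).filter (· ∈ l), ?_, ?_⟩
  · rw [List.mem_sublists]; exact List.filter_sublist
  · rw [List.mem_permutations]
    refine List.perm_of_nodup_nodup_toFinset_eq hl
      ((List.nodup_finRange n).filter _) ?_
    ext x
    simp [List.mem_filter]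
  
noncomputable def pathFinset (lam : Fin n → Fin n → ℝ) (A : Finset (Fin n))
    (i j : Fin n) : Finset (List (Fin n)) :=
  (nodupLists n).filter (IsPathIn lam A i j)

lemma mem_pathFinset {A : Finset (Fin n)} {i j : Fin n} {l : List (Fin n)} :
    l ∈ pathFinset lam A i j ↔ IsPathIn lam A i j l := by
  rw [pathFinset, Finset.mem_filter]
  exact ⟨fun h => h.2, fun h => ⟨mem_nodupLists h.2.1, h⟩⟩

noncomputable def pSum (A : Finset (Fin n)) (i j : Fin n) : Polynomial ℝ :=
  ∑ l ∈ pathFinset lam A i j, C (pathWeight lam l) * mu r lam (A \ l.toFinset) ^ 2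

-- ===== path utilities =====
lemma chain'_of_zip {α : Type*} {R : α → α → Prop} :
    ∀ l : List α, l.Chain' R → ∀ p ∈ l.zip l.tail, R p.1 p.2
  | [], _, p, hp => by simp at hp
  | [a], _, p, hp => by simp at hp
  | a :: b :: t, h, p, hp => by
      unfold List.Chain' at h; rw [List.isChain_cons_cons] at h
      rw [show (a :: b :: t).zip (a :: b :: t).tail
          = (a, b) :: ((b :: t).zip (b :: t).tail) from rfl, List.mem_cons] at hp
      rcases hp with rfl | hp
      · exact h.1
      · exact chain'_of_zip (b :: t) h.2 p hp

lemma pathWeight_pos (hnonpos : ∀ j k, lam j k ≤ 0) {l : List (Fin n)}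
    (hl : l.Chain' fun u v => lam u v ≠ 0) : 0 < pathWeight lam l := by
  rw [pathWeight]
  apply List.prod_pos
  intro x hx
  rw [List.mem_map] at hx
  obtain ⟨p, hp, rfl⟩ := hx
  have hne := chain'_of_zip l hl p hp
  have hlt : lam p.1 p.2 < 0 := lt_of_le_of_ne (hnonpos p.1 p.2) hne
  linarith

lemma isPathIn_reverse (hsym : ∀ j k, lam j k = lam k j) {A : Finset (Fin n)}
    {i j : Fin n} {l : List (Fin n)} (h : IsPathIn lam A i j l) :
    IsPathIn lam A j i l.reverse := by
  obtain ⟨h1, h2, h3, h4, h5, h6⟩ := h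
  refine ⟨by simpa using h1, by simpa using h2, by simpa using h3, ?_, ?_, ?_⟩
  · rw [List.head?_reverse]; exact h5
  · rw [List.getLast?_reverse]; exact h4
  · unfold List.Chain'; rw [List.isChain_reverse]
    refine h6.imp ?_
    intro a b hab
    rw [hsym] at hab
    exact hab

lemma isPathIn_self {A : Finset (Fin n)} {j : Fin n} (hj : j ∈ A) {l : List (Fin n)} :
    IsPathIn lam A j j l ↔ l = [j] := by
  constructor
  · rintro ⟨h1, h2, h3, h4, h5, h6⟩
    cases l with
    | nil => exact absurd rfl h1
    | cons a t =>
      have ha : a = j := by simpa using h4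
      cases t with
      | nil => rw [ha]
      | cons b s =>
        exfalso
        rw [List.getLast?_cons_cons] at h5
        have hmem : j ∈ b :: s := by
          have := List.mem_getLast?_eq_getLast (l := b :: s) (x := j)
            (by rw [Option.mem_def]; exact h5)
          obtain ⟨hne, heq⟩ := this
          rw [heq]; exact List.getLast_mem hne
        rw [ha] at h2
        exact (List.nodup_cons.mp h2).1 hmem
  · rintro rfl
    refine ⟨by simp, by simp, ?_, rfl, rfl, List.isChain_singleton _⟩
    intro v hv
    simp only [List.mem_singleton] at hv
    subst hv
    exact hj

lemma pSum_self {A : Finset (Fin n)} {j : Fin n} (hj : j ∈ A) :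
    pSum r lam A j j = mu r lam (A.erase j) ^ 2 := by
  have hset : pathFinset lam A j j = {[j]} := by
    ext l
    rw [mem_pathFinset, isPathIn_self lam hj, Finset.mem_singleton]
  rw [pSum, hset, Finset.sum_singleton]
  have h1 : pathWeight lam [j] = 1 := by simp [pathWeight]
  have h2 : A \ [j].toFinset = A.erase j := by
    simp [Finset.erase_eq]
  rw [h1, h2, map_one, one_mul]

end Dev
section Dev2
variable {n : ℕ} (r : Fin n → ℝ) (lam : Fin n → Fin n → ℝ)

lemma sos_bound {ι : Type*} (θ : ℝ) (T : Finset ι) (a : ι → ℝ) (q : ι → Polynomial ℝ)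
    (ha : ∀ t ∈ T, 0 < a t) (hq : ∀ t ∈ T, q t ≠ 0) {t0 : ι} (ht0 : t0 ∈ T) :
    (∑ t ∈ T, C (a t) * q t ^ 2) ≠ 0 ∧
    (∑ t ∈ T, C (a t) * q t ^ 2).rootMultiplicity θ
      ≤ 2 * (q t0).rootMultiplicity θ := by
  classical
  set q' : ι → Polynomial ℝ := fun t => if q t = 0 then 1 else q t with hq'def
  have hq'0 : ∀ t, q' t ≠ 0 := by
    intro t; by_cases h : q t = 0 <;> simp [hq'def, h]
  have hqq' : ∀ t ∈ T, q' t = q t := by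
    intro t ht; simp [hq'def, hq t ht]
  set m : ι → ℕ := fun t => (q' t).rootMultiplicity θ with hmdef
  choose s hseq hsnd using fun t =>
    (q' t).exists_eq_pow_rootMultiplicity_mul_and_not_dvd (hq'0 t) θ
  have hsroot : ∀ t, eval θ (s t) ≠ 0 := fun t ht =>
    hsnd t (dvd_iff_isRoot.mpr ht)
  obtain ⟨t1, ht1, hmin⟩ := T.exists_min_image m ⟨t0, ht0⟩
  set V : Polynomial ℝ := ∑ t ∈ T, C (a t) * ((X - C θ) ^ (m t - m t1) * s t) ^ 2 with hV
  have hWV : (∑ t ∈ T, C (a t) * q t ^ 2) = (X - C θ) ^ (2 * m t1) * V := by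
    rw [hV, Finset.mul_sum]
    refine Finset.sum_congr rfl ?_
    intro t ht
    have h1 : q t = (X - C θ) ^ (m t1) * ((X - C θ) ^ (m t - m t1) * s t) := by
      rw [← mul_assoc, ← pow_add, Nat.add_sub_cancel' (hmin t ht), ← hseq t, hqq' t ht]
    rw [h1]; ring
  have hVθ : 0 < eval θ V := by
    rw [hV, eval_finset_sum]
    refine Finset.sum_pos' ?_ ⟨t1, ht1, ?_⟩
    · intro t ht
      simp only [eval_mul, eval_pow, eval_C]
      exact mul_nonneg (le_of_lt (ha t ht)) (sq_nonneg _)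
    · simp only [Nat.sub_self, pow_zero, one_mul, eval_mul, eval_pow, eval_C]
      have h2 := hsroot t1
      exact mul_pos (ha t1 ht1) (by positivity)
  have hV0 : V ≠ 0 := fun h => by rw [h] at hVθ; simp at hVθ
  have hW0 : (∑ t ∈ T, C (a t) * q t ^ 2) ≠ 0 := by
    rw [hWV]
    exact mul_ne_zero (pow_ne_zero _ (X_sub_C_ne_zero θ)) hV0
  refine ⟨hW0, ?_⟩
  rw [hWV, rootMultiplicity_mul (hWV ▸ hW0), rootMultiplicity_X_sub_C_pow,
    rootMultiplicity_eq_zero (fun hr => hVθ.ne' hr)]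
  have h3 : m t1 ≤ m t0 := hmin t0 ht0
  have h4 : m t0 = (q t0).rootMultiplicity θ := by simp only [hmdef]; rw [hqq' t0 ht0]
  omega

lemma pole_lemma (θ : ℝ) (p q : Polynomial ℝ) (hq : q ≠ 0)
    (h : ((-(toRF p)) / toRF q).denom.eval θ = 0) :
    p ≠ 0 ∧ p.rootMultiplicity θ + 1 ≤ q.rootMultiplicity θ := by
  set f := (-(toRF p)) / toRF q with hf
  have hp0 : p ≠ 0 := by
    rintro rfl
    simp [hf, toRF, map_zero] at h
  have hf0 : f ≠ 0 := by
    intro h0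
    rw [h0] at h
    simp at h
  have key : f.num * q = (-p) * f.denom := by
    rw [RatFunc.num_mul_eq_mul_denom_iff hq, map_neg]
    rw [hf]; unfold toRF; rfl
  have key2 : (-f.num) * q = p * f.denom := by linear_combination -key
  have hnum : (-f.num) ≠ 0 := neg_ne_zero.mpr (RatFunc.num_ne_zero hf0)
  have hden : f.denom ≠ 0 := RatFunc.denom_ne_zero f
  have hmul : (-f.num).rootMultiplicity θ + q.rootMultiplicity θ
      = p.rootMultiplicity θ + f.denom.rootMultiplicity θ := by
    rw [← rootMultiplicity_mul (mul_ne_zero hnum hq), key2,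
      rootMultiplicity_mul (mul_ne_zero hp0 hden)]
  have hnum0 : (-f.num).rootMultiplicity θ = 0 := by
    apply rootMultiplicity_eq_zero
    intro hroot
    have hroot' : f.num.IsRoot θ := by
      have : eval θ (-f.num) = 0 := hroot
      rw [eval_neg, neg_eq_zero] at this
      exact this
    have hcop := RatFunc.isCoprime_num_denom f
    have d1 : (X - C θ) ∣ f.num := dvd_iff_isRoot.mpr hroot'
    have d2 : (X - C θ) ∣ f.denom := dvd_iff_isRoot.mpr h
    exact Polynomial.not_isUnit_X_sub_C θ (hcop.isUnit_of_dvd' d1 d2)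
  have hden1 : 1 ≤ f.denom.rootMultiplicity θ := (rootMultiplicity_pos hden).mpr h
  exact ⟨hp0, by omega⟩

lemma lamSim_eq (A : Finset (Fin n)) (i j : Fin n) :
    lamSim r lam i j A = -(toRF (pSum r lam A i j))
      / toRF ((mu r lam ((A.erase i).erase j)) ^ 2) := by
  rw [lamSim]
  have hset : {l : List (Fin n) | IsPathIn lam A i j l} = ↑(pathFinset lam A i j) := by
    ext l; simp [mem_pathFinset]
  rw [hset, finsum_mem_coe_finset]
  congr 1
  · rw [pSum]; unfold toRF; rw [map_sum]
  · unfold toRF; rw [map_pow]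

end Dev2
section Dev3
variable {n : ℕ} (r : Fin n → ℝ) (lam : Fin n → Fin n → ℝ)

lemma mem_mVerts {M : Finset (Fin n × Fin n)} {x : Fin n} :
    x ∈ mVerts M ↔ ∃ e ∈ M, e.1 = x ∨ e.2 = x := by
  simp only [mVerts, Finset.mem_union, Finset.mem_image]
  constructor
  · rintro (⟨e, he, rfl⟩ | ⟨e, he, rfl⟩)
    · exact ⟨e, he, Or.inl rfl⟩
    · exact ⟨e, he, Or.inr rfl⟩
  · rintro ⟨e, he, rfl | rfl⟩
    · exact Or.inl ⟨e, he, rfl⟩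
    · exact Or.inr ⟨e, he, rfl⟩

lemma matchings_erase (A : Finset (Fin n)) (v : Fin n) :
    matchings lam (A.erase v) = (matchings lam A).filter (fun M => v ∉ mVerts M) := by
  ext M
  simp only [mem_matchings, Finset.mem_filter]
  constructor
  · intro h
    have hnv : v ∉ mVerts M := by
      intro hv
      rw [mem_mVerts] at hv
      obtain ⟨e, he, hor⟩ := hv
      obtain ⟨_, _, h3, h4⟩ := h.1 e he
      rcases hor with h5 | h5
      · exact (Finset.mem_erase.mp h3).1 h5
      · exact (Finset.mem_erase.mp h4).1 h5
    refine ⟨⟨fun e he => ?_, h.2⟩, hnv⟩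
    obtain ⟨h1, h2, h3, h4⟩ := h.1 e he
    exact ⟨h1, h2, Finset.mem_of_mem_erase h3, Finset.mem_of_mem_erase h4⟩
  · rintro ⟨hM, hv⟩
    refine ⟨fun e he => ?_, hM.2⟩
    obtain ⟨h1, h2, h3, h4⟩ := hM.1 e he
    refine ⟨h1, h2, Finset.mem_erase.mpr ⟨?_, h3⟩, Finset.mem_erase.mpr ⟨?_, h4⟩⟩
    · intro hev; exact hv (mem_mVerts.mpr ⟨e, he, Or.inl hev⟩)
    · intro hev; exact hv (mem_mVerts.mpr ⟨e, he, Or.inr hev⟩)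

lemma erase_sdiff_comm' (A B : Finset (Fin n)) (v : Fin n) :
    (A \ B).erase v = A.erase v \ B := by
  ext x
  simp only [Finset.mem_erase, Finset.mem_sdiff]
  tauto

lemma derivative_finset_prod {ι : Type*} [DecidableEq ι] (s : Finset ι) (f : ι → Polynomial ℝ) :
    derivative (∏ i ∈ s, f i) = ∑ b ∈ s, (∏ a ∈ s.erase b, f a) * derivative (f b) := by
  induction s using Finset.induction_on with
  | empty => simp
  | insert a s h ih =>
    rw [Finset.prod_insert h, derivative_mul, ih, Finset.sum_insert h, Finset.erase_insert h]
    rw [Finset.mul_sum]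
    congr 1
    · ring
    · refine Finset.sum_congr rfl fun b hb => ?_
      have hba : b ≠ a := fun hba => h (hba ▸ hb)
      rw [Finset.erase_insert_of_ne (Ne.symm hba), Finset.prod_insert (fun ha => h (Finset.mem_of_mem_erase ha))]
      ring

lemma mu_derivative (A : Finset (Fin n)) :
    derivative (mu r lam A) = ∑ v ∈ A, mu r lam (A.erase v) := by
  rw [mu, derivative_sum]
  have step1 : ∀ M ∈ matchings lam A,
      derivative ((∏ i ∈ A \ mVerts M, (X - C (r i))) * C (∏ e ∈ M, lam e.1 e.2))
      = ∑ v ∈ A \ mVerts M,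
          (∏ i ∈ A.erase v \ mVerts M, (X - C (r i))) * C (∏ e ∈ M, lam e.1 e.2) := by
    intro M hM
    rw [derivative_mul, derivative_C, mul_zero, add_zero, derivative_finset_prod, Finset.sum_mul]
    refine Finset.sum_congr rfl fun v hv => ?_
    rw [derivative_X_sub_C, mul_one, erase_sdiff_comm']
  rw [Finset.sum_congr rfl step1]
  have step2 : ∀ M ∈ matchings lam A,
      (∑ v ∈ A \ mVerts M,
          (∏ i ∈ A.erase v \ mVerts M, (X - C (r i))) * C (∏ e ∈ M, lam e.1 e.2))
      = ∑ v ∈ A, if v ∉ mVerts M then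
          (∏ i ∈ A.erase v \ mVerts M, (X - C (r i))) * C (∏ e ∈ M, lam e.1 e.2) else 0 := by
    intro M hM
    rw [Finset.sdiff_eq_filter, Finset.sum_filter]
  rw [Finset.sum_congr rfl step2, Finset.sum_comm]
  refine Finset.sum_congr rfl fun v hv => ?_
  rw [mu, matchings_erase, Finset.sum_filter]
end Dev3
section Dev4
variable {n : ℕ} (r : Fin n → ℝ) (lam : Fin n → Fin n → ℝ)

noncomputable def pOrd (v u : Fin n) : Fin n × Fin n := if v < u then (v, u) else (u, v)

lemma pOrd_cases {v u : Fin n} (h : v ≠ u) :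
    ((pOrd v u) = (v, u) ∧ v < u) ∨ ((pOrd v u) = (u, v) ∧ u < v) := by
  rw [pOrd]
  rcases lt_or_gt_of_ne h with hlt | hgt
  · rw [if_pos hlt]; exact Or.inl ⟨rfl, hlt⟩
  · rw [if_neg (not_lt.mpr (le_of_lt hgt))]; exact Or.inr ⟨rfl, hgt⟩

lemma mVerts_insert {e : Fin n × Fin n} {M : Finset (Fin n × Fin n)} :
    mVerts (insert e M) = insert e.1 (insert e.2 (mVerts M)) := by
  ext x
  simp only [mem_mVerts, Finset.mem_insert]
  constructor
  · rintro ⟨f, hf, hor⟩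
    rcases hf with rfl | hfM
    · tauto
    · right; right; exact ⟨f, hfM, hor⟩
  · rintro (rfl | rfl | ⟨f, hfM, hor⟩)
    · exact ⟨e, Or.inl rfl, Or.inl rfl⟩
    · exact ⟨e, Or.inl rfl, Or.inr rfl⟩
    · exact ⟨f, Or.inr hfM, hor⟩

lemma fiber_avoids {A : Finset (Fin n)} {v u : Fin n} {M' : Finset (Fin n × Fin n)}
    (hM' : M' ∈ matchings lam ((A.erase v).erase u)) :
    ∀ f ∈ M', f.1 ≠ v ∧ f.2 ≠ v ∧ f.1 ≠ u ∧ f.2 ≠ u ∧ f.1 ∈ A ∧ f.2 ∈ A := by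
  intro f hf
  obtain ⟨_, _, h3, h4⟩ := ((mem_matchings lam).mp hM').1 f hf
  obtain ⟨h3u, h3v, h3A⟩ := Finset.mem_erase.mp h3 |>.imp id (fun h => Finset.mem_erase.mp h)
  obtain ⟨h4u, h4v, h4A⟩ := Finset.mem_erase.mp h4 |>.imp id (fun h => Finset.mem_erase.mp h)
  exact ⟨h3v, h4v, h3u, h4u, h3A, h4A⟩

lemma insert_matching (hsym : ∀ j k, lam j k = lam k j) {A : Finset (Fin n)}
    {v u : Fin n} {M' : Finset (Fin n × Fin n)}
    (hv : v ∈ A) (hu : u ∈ A.erase v) (hlam : lam v u ≠ 0)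
    (hM' : M' ∈ matchings lam ((A.erase v).erase u)) :
    insert (pOrd v u) M' ∈ matchings lam A ∧ v ∈ mVerts (insert (pOrd v u) M') ∧
    pOrd v u ∉ M' ∧
    A \ mVerts (insert (pOrd v u) M') = (A.erase v).erase u \ mVerts M' ∧
    (∏ e ∈ insert (pOrd v u) M', lam e.1 e.2) = lam v u * ∏ e ∈ M', lam e.1 e.2 := by
  obtain ⟨huv, huA⟩ := Finset.mem_erase.mp hu
  have hvu : v ≠ u := fun h => huv h.symm
  have havoid := fiber_avoids lam hM'
  have hMm := (mem_matchings lam).mp hM'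
  set e := pOrd v u with he
  have hecoord : (e = (v, u) ∧ v < u) ∨ (e = (u, v) ∧ u < v) := pOrd_cases hvu
  have he1 : e.1 = v ∨ e.1 = u := by rcases hecoord with ⟨h, _⟩ | ⟨h, _⟩ <;> rw [h] <;> simp
  have he2 : e.2 = v ∨ e.2 = u := by rcases hecoord with ⟨h, _⟩ | ⟨h, _⟩ <;> rw [h] <;> simp
  have heM' : e ∉ M' := by
    intro hin
    obtain ⟨a1, a2, a3, a4, _, _⟩ := havoid e hin
    rcases he1 with h | h
    · exact a1 h
    · exact a3 h
  have hlt : e.1 < e.2 := by rcases hecoord with ⟨h, hl⟩ | ⟨h, hl⟩ <;> rw [h] <;> exact hl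
  have hlame : lam e.1 e.2 = lam v u := by
    rcases hecoord with ⟨h, _⟩ | ⟨h, _⟩ <;> rw [h] <;> exact hsym u v
  have he1A : e.1 ∈ A := by rcases he1 with h | h <;> rw [h] <;> [exact hv; exact huA]
  have he2A : e.2 ∈ A := by rcases he2 with h | h <;> rw [h] <;> [exact hv; exact huA]
  have hmatch : insert e M' ∈ matchings lam A := by
    rw [mem_matchings]
    constructor
    · intro f hf
      rcases Finset.mem_insert.mp hf with rfl | hfM
      · exact ⟨hlt, by rw [hlame]; exact hlam, he1A, he2A⟩
      · obtain ⟨b1, b2, b3, b4⟩ := hMm.1 f hfM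
        exact ⟨b1, b2, (havoid f hfM).2.2.2.2.1, (havoid f hfM).2.2.2.2.2⟩
    · intro f hf g hg hfg
      rcases Finset.mem_insert.mp hf with rfl | hfM <;>
        rcases Finset.mem_insert.mp hg with rfl | hgM
      · exact absurd rfl hfg
      · obtain ⟨a1, a2, a3, a4, _, _⟩ := havoid g hgM
        constructor
        · rcases he1 with h | h <;> rw [h] <;> [exact fun hh => a1 hh.symm; exact fun hh => a3 hh.symm]
        constructor
        · rcases he1 with h | h <;> rw [h] <;> [exact fun hh => a2 hh.symm; exact fun hh => a4 hh.symm]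
        constructor
        · rcases he2 with h | h <;> rw [h] <;> [exact fun hh => a1 hh.symm; exact fun hh => a3 hh.symm]
        · rcases he2 with h | h <;> rw [h] <;> [exact fun hh => a2 hh.symm; exact fun hh => a4 hh.symm]
      · obtain ⟨a1, a2, a3, a4, _, _⟩ := havoid f hfM
        constructor
        · rcases he1 with h | h <;> rw [h] <;> [exact fun hh => a1 hh; exact fun hh => a3 hh]
        constructor
        · rcases he2 with h | h <;> rw [h] <;> [exact fun hh => a1 hh; exact fun hh => a3 hh]
        constructor
        · rcases he1 with h | h <;> rw [h] <;> [exact fun hh => a2 hh; exact fun hh => a4 hh]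
        · rcases he2 with h | h <;> rw [h] <;> [exact fun hh => a2 hh; exact fun hh => a4 hh]
      · exact hMm.2 f hfM g hgM hfg
  have hvmem : v ∈ mVerts (insert e M') := by
    rw [mem_mVerts]
    rcases he1 with h | h
    · exact ⟨e, Finset.mem_insert_self _ _, Or.inl h⟩
    · rcases he2 with h2 | h2
      · exact ⟨e, Finset.mem_insert_self _ _, Or.inr h2⟩
      · exfalso; rw [h, h2] at hlt; exact lt_irrefl _ hlt
  have hsdiff : A \ mVerts (insert e M') = (A.erase v).erase u \ mVerts M' := by
    ext x
    rw [mVerts_insert]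
    simp only [Finset.mem_sdiff, Finset.mem_insert, Finset.mem_erase, not_or]
    constructor
    · rintro ⟨hxA, hx1, hx2, hxm⟩
      have hxv : x ≠ v := by
        rcases he1 with h | h
        · intro hh; exact hx1 (hh.trans h.symm)
        · rcases he2 with h2 | h2
          · intro hh; exact hx2 (hh.trans h2.symm)
          · exfalso; rw [h, h2] at hlt; exact lt_irrefl _ hlt
      have hxu : x ≠ u := by
        rcases he1 with h | h
        · rcases he2 with h2 | h2
          · exfalso; rw [h, h2] at hlt; exact lt_irrefl _ hlt
          · intro hh; exact hx2 (hh.trans h2.symm)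
        · intro hh; exact hx1 (hh.trans h.symm)
      exact ⟨⟨hxu, hxv, hxA⟩, hxm⟩
    · rintro ⟨⟨hxu, hxv, hxA⟩, hxm⟩
      refine ⟨hxA, ?_, ?_, hxm⟩
      · rcases he1 with h | h <;> rw [h] <;> [exact fun hh => hxv hh; exact fun hh => hxu hh]
      · rcases he2 with h | h <;> rw [h] <;> [exact fun hh => hxv hh; exact fun hh => hxu hh]
  have hprod : (∏ f ∈ insert e M', lam f.1 f.2) = lam v u * ∏ f ∈ M', lam f.1 f.2 := by
    rw [Finset.prod_insert heM', hlame]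
  exact ⟨hmatch, hvmem, heM', hsdiff, hprod⟩

end Dev4
section Dev5
variable {n : ℕ} (r : Fin n → ℝ) (lam : Fin n → Fin n → ℝ)

lemma extract_matching (hsym : ∀ j k, lam j k = lam k j) {A : Finset (Fin n)}
    {v : Fin n} {M : Finset (Fin n × Fin n)}
    (hM : M ∈ matchings lam A) (hvM : v ∈ mVerts M) :
    ∃ u M', (u ∈ A.erase v ∧ lam v u ≠ 0) ∧
      M' ∈ matchings lam ((A.erase v).erase u) ∧ insert (pOrd v u) M' = M := by
  classical
  rw [mem_mVerts] at hvM
  obtain ⟨e, heM, hor⟩ := hvM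
  have hMm := (mem_matchings lam).mp hM
  obtain ⟨hlt, hlam, h1A, h2A⟩ := hMm.1 e heM
  have hM'mem : ∀ u : Fin n, (e.1 = u ∨ e.2 = u) → (e.1 = v ∨ e.2 = v) →
      M.erase e ∈ matchings lam ((A.erase v).erase u) := by
    intro u hu hv'
    rw [mem_matchings]
    constructor
    · intro f hf
      obtain ⟨hfe, hfM⟩ := Finset.mem_erase.mp hf
      obtain ⟨b1, b2, b3, b4⟩ := hMm.1 f hfM
      obtain ⟨c1, c2, c3, c4⟩ := hMm.2 f hfM e heM hfe
      refine ⟨b1, b2, ?_, ?_⟩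
      · refine Finset.mem_erase.mpr ⟨?_, Finset.mem_erase.mpr ⟨?_, b3⟩⟩
        · rcases hu with h | h
          · rw [← h]; exact c1
          · rw [← h]; exact c2
        · rcases hv' with h | h
          · rw [← h]; exact c1
          · rw [← h]; exact c2
      · refine Finset.mem_erase.mpr ⟨?_, Finset.mem_erase.mpr ⟨?_, b4⟩⟩
        · rcases hu with h | h
          · rw [← h]; exact c3
          · rw [← h]; exact c4
        · rcases hv' with h | h
          · rw [← h]; exact c3
          · rw [← h]; exact c4
    · intro f hf g hg hfg
      exact hMm.2 f (Finset.mem_of_mem_erase hf) g (Finset.mem_of_mem_erase hg) hfg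
  rcases hor with h1 | h2
  · -- e.1 = v, u := e.2
    refine ⟨e.2, M.erase e, ⟨?_, ?_⟩, ?_, ?_⟩
    · refine Finset.mem_erase.mpr ⟨?_, h2A⟩
      rw [← h1]; exact ne_of_gt hlt
    · rw [← h1]; exact hlam
    · exact hM'mem e.2 (Or.inr rfl) (Or.inl h1)
    · have hpe : pOrd v e.2 = e := by
        have hvlt : v < e.2 := by rw [← h1]; exact hlt
        rcases pOrd_cases (ne_of_lt hvlt) with ⟨h, _⟩ | ⟨h, hl⟩
        · rw [h, ← h1]
        · exact absurd hvlt (not_lt.mpr (le_of_lt hl))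
      rw [hpe, Finset.insert_erase heM]
  · -- e.2 = v, u := e.1
    refine ⟨e.1, M.erase e, ⟨?_, ?_⟩, ?_, ?_⟩
    · refine Finset.mem_erase.mpr ⟨?_, h1A⟩
      rw [← h2]; exact ne_of_lt hlt
    · rw [← h2, hsym]; exact hlam
    · exact hM'mem e.1 (Or.inl rfl) (Or.inr h2)
    · have hpe : pOrd v e.1 = e := by
        have hvgt : e.1 < v := by rw [← h2]; exact hlt
        rcases pOrd_cases (ne_of_gt hvgt) with ⟨h, hl⟩ | ⟨h, _⟩
        · exact absurd hvgt (not_lt.mpr (le_of_lt hl))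
        · rw [h, ← h2]
      rw [hpe, Finset.insert_erase heM]

lemma pOrd_coord_v {v u : Fin n} (h : v ≠ u) : (pOrd v u).1 = v ∨ (pOrd v u).2 = v := by
  rcases pOrd_cases h with ⟨he, _⟩ | ⟨he, _⟩
  · rw [he]; exact Or.inl rfl
  · rw [he]; exact Or.inr rfl

lemma pOrd_inj {v u₁ u₂ : Fin n} (h1 : v ≠ u₁) (h2 : v ≠ u₂)
    (h : pOrd v u₁ = pOrd v u₂) : u₁ = u₂ := by
  rcases pOrd_cases h1 with ⟨he1, _⟩ | ⟨he1, hl1⟩ <;>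
    rcases pOrd_cases h2 with ⟨he2, _⟩ | ⟨he2, hl2⟩ <;>
      rw [he1, he2, Prod.mk.injEq] at h
  · exact h.2
  · exact absurd h.1 h2
  · exact absurd h.1.symm h1
  · exact h.1

lemma mu_recur (hsym : ∀ j k, lam j k = lam k j) {v : Fin n} {A : Finset (Fin n)}
    (hv : v ∈ A) :
    mu r lam A = (X - C (r v)) * mu r lam (A.erase v)
      + ∑ u ∈ A.erase v, C (lam v u) * mu r lam ((A.erase v).erase u) := by
  classical
  conv_lhs => rw [mu]
  rw [← Finset.sum_filter_add_sum_filter_not (matchings lam A) (fun M => v ∉ mVerts M)]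
  congr 1
  · rw [mu, matchings_erase, Finset.mul_sum]
    refine Finset.sum_congr rfl fun M hM => ?_
    obtain ⟨hMA, hvM⟩ := Finset.mem_filter.mp hM
    have hins : A \ mVerts M = insert v (A.erase v \ mVerts M) := by
      ext x
      simp only [Finset.mem_sdiff, Finset.mem_insert, Finset.mem_erase]
      constructor
      · rintro ⟨hxA, hxm⟩
        by_cases hxv : x = v
        · exact Or.inl hxv
        · exact Or.inr ⟨⟨hxv, hxA⟩, hxm⟩
      · rintro (rfl | ⟨⟨hxv, hxA⟩, hxm⟩)
        · exact ⟨hv, hvM⟩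
        · exact ⟨hxA, hxm⟩
    rw [hins, Finset.prod_insert (by simp), mul_assoc]
  · have hdrop : (∑ u ∈ A.erase v, C (lam v u) * mu r lam ((A.erase v).erase u))
        = ∑ u ∈ (A.erase v).filter (fun u => lam v u ≠ 0),
            C (lam v u) * mu r lam ((A.erase v).erase u) := by
      refine (Finset.sum_filter_of_ne ?_).symm
      intro u hu hne h0
      exact hne (by rw [h0, map_zero, zero_mul])
    rw [hdrop]
    have hexp : ∀ u ∈ (A.erase v).filter (fun u => lam v u ≠ 0),
        C (lam v u) * mu r lam ((A.erase v).erase u)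
        = ∑ M' ∈ matchings lam ((A.erase v).erase u),
            (∏ i ∈ (A.erase v).erase u \ mVerts M', (X - C (r i)))
              * C (lam v u * ∏ e ∈ M', lam e.1 e.2) := by
      intro u hu
      rw [mu, Finset.mul_sum]
      refine Finset.sum_congr rfl fun M' hM' => ?_
      rw [map_mul]; ring
    rw [Finset.sum_congr rfl hexp, Finset.sum_sigma']
    refine (Finset.sum_bij
      (fun (x : Σ _ : Fin n, Finset (Fin n × Fin n)) _ => insert (pOrd v x.1) x.2)
      ?_ ?_ ?_ ?_).symm
    · -- maps into target
      rintro ⟨u, M'⟩ hx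
      obtain ⟨hu, hM'⟩ := Finset.mem_sigma.mp hx
      obtain ⟨huA, hlam⟩ := Finset.mem_filter.mp hu
      obtain ⟨hmatch, hvmem, _, _, _⟩ := insert_matching lam hsym hv huA hlam hM'
      exact Finset.mem_filter.mpr ⟨hmatch, not_not.mpr hvmem⟩
    · -- injective
      rintro ⟨u₁, M₁⟩ hx₁ ⟨u₂, M₂⟩ hx₂ heq
      have heq' : insert (pOrd v u₁) M₁ = insert (pOrd v u₂) M₂ := heq
      obtain ⟨hu₁, hM₁⟩ := Finset.mem_sigma.mp hx₁
      obtain ⟨hu₂, hM₂⟩ := Finset.mem_sigma.mp hx₂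
      obtain ⟨hu₁A, hlam₁⟩ := Finset.mem_filter.mp hu₁
      obtain ⟨hu₂A, hlam₂⟩ := Finset.mem_filter.mp hu₂
      have hvu₁ : v ≠ u₁ := fun h => (Finset.mem_erase.mp hu₁A).1 h.symm
      have hvu₂ : v ≠ u₂ := fun h => (Finset.mem_erase.mp hu₂A).1 h.symm
      have he₁mem : pOrd v u₁ ∈ insert (pOrd v u₂) M₂ := by
        rw [← heq']; exact Finset.mem_insert_self _ _
      have hee : pOrd v u₁ = pOrd v u₂ := by
        rcases Finset.mem_insert.mp he₁mem with h | h
        · exact h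
        · exfalso
          obtain ⟨a1, a2, _, _, _, _⟩ := fiber_avoids lam hM₂ _ h
          rcases pOrd_coord_v hvu₁ with hc | hc
          · exact a1 hc
          · exact a2 hc
      have huu : u₁ = u₂ := pOrd_inj hvu₁ hvu₂ hee
      subst huu
      have hnotmem : ∀ (MM : Finset (Fin n × Fin n)),
          (∀ f ∈ MM, f.1 ≠ v ∧ f.2 ≠ v ∧ f.1 ≠ u₁ ∧ f.2 ≠ u₁ ∧ f.1 ∈ A ∧ f.2 ∈ A) →
          pOrd v u₁ ∉ MM := by
        intro MM hav hmem
        obtain ⟨a1, a2, _, _, _, _⟩ := hav _ hmem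
        rcases pOrd_coord_v hvu₁ with hc | hc
        · exact a1 hc
        · exact a2 hc
      have hne₁ : pOrd v u₁ ∉ M₁ := hnotmem M₁ (fiber_avoids lam hM₁)
      have hne₂ : pOrd v u₁ ∉ M₂ := hnotmem M₂ (fiber_avoids lam hM₂)
      have hMM : M₁ = M₂ := by
        rw [← Finset.erase_insert hne₁, heq', Finset.erase_insert hne₂]
      rw [hMM]
    · -- surjective
      intro M hM
      obtain ⟨hMA, hvM⟩ := Finset.mem_filter.mp hM
      obtain ⟨u, M', ⟨huA, hlam⟩, hM', hins⟩ :=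
        extract_matching lam hsym hMA (not_not.mp hvM)
      exact ⟨⟨u, M'⟩, Finset.mem_sigma.mpr
        ⟨Finset.mem_filter.mpr ⟨huA, hlam⟩, hM'⟩, hins⟩
    · -- terms agree
      rintro ⟨u, M'⟩ hx
      obtain ⟨hu, hM'⟩ := Finset.mem_sigma.mp hx
      obtain ⟨huA, hlam⟩ := Finset.mem_filter.mp hu
      obtain ⟨_, _, _, hsdiff, hprod⟩ := insert_matching lam hsym hv huA hlam hM'
      rw [hsdiff, hprod]

end Dev5
section Dev6
variable {n : ℕ} (r : Fin n → ℝ) (lam : Fin n → Fin n → ℝ)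

lemma pathWeight_cons_cons (a b : Fin n) (t : List (Fin n)) :
    pathWeight lam (a :: b :: t) = (-lam a b) * pathWeight lam (b :: t) := by
  simp [pathWeight]

lemma cons_isPathIn {A : Finset (Fin n)} {i j w : Fin n} {l' : List (Fin n)}
    (hi : i ∈ A) (hw : w ∈ A.erase i) (hlam : lam i w ≠ 0)
    (hl' : IsPathIn lam (A.erase i) w j l') :
    IsPathIn lam A i j (i :: l') := by
  obtain ⟨h1, h2, h3, h4, h5, h6⟩ := hl'
  obtain ⟨wt, rfl⟩ : ∃ t, l' = w :: t := by
    cases l' with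
    | nil => exact absurd rfl h1
    | cons a t =>
      simp only [List.head?_cons, Option.some.injEq] at h4
      exact ⟨t, by rw [h4]⟩
  refine ⟨by simp, ?_, ?_, rfl, ?_, ?_⟩
  · rw [List.nodup_cons]
    exact ⟨fun hmem => (Finset.mem_erase.mp (h3 i hmem)).1 rfl, h2⟩
  · intro x hx
    rcases List.mem_cons.mp hx with rfl | hx'
    · exact hi
    · exact Finset.mem_of_mem_erase (h3 x hx')
  · rw [List.getLast?_cons_cons]; exact h5
  · unfold List.Chain'; rw [List.isChain_cons_cons]
    exact ⟨hlam, h6⟩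

lemma pSum_cons (hsym : ∀ j k, lam j k = lam k j) {A : Finset (Fin n)} {i j : Fin n}
    (hne : i ≠ j) (hi : i ∈ A) :
    pSum r lam A i j = ∑ w ∈ A.erase i, C (-lam i w) * pSum r lam (A.erase i) w j := by
  classical
  have hdrop : (∑ w ∈ A.erase i, C (-lam i w) * pSum r lam (A.erase i) w j)
      = ∑ w ∈ (A.erase i).filter (fun w => lam i w ≠ 0),
          C (-lam i w) * pSum r lam (A.erase i) w j := by
    refine (Finset.sum_filter_of_ne ?_).symm
    intro w hw hne' h0
    exact hne' (by rw [h0, neg_zero, map_zero, zero_mul])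
  rw [hdrop]
  have hexp : ∀ w ∈ (A.erase i).filter (fun w => lam i w ≠ 0),
      C (-lam i w) * pSum r lam (A.erase i) w j
      = ∑ l' ∈ pathFinset lam (A.erase i) w j,
          C (-lam i w * pathWeight lam l') * mu r lam ((A.erase i) \ l'.toFinset) ^ 2 := by
    intro w hw
    rw [pSum, Finset.mul_sum]
    refine Finset.sum_congr rfl fun l' hl' => ?_
    rw [map_mul]; ring
  rw [Finset.sum_congr rfl hexp, Finset.sum_sigma']
  rw [pSum]
  refine (Finset.sum_bij
    (fun (x : Σ _ : Fin n, List (Fin n)) _ => i :: x.2) ?_ ?_ ?_ ?_).symm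
  · rintro ⟨w, l'⟩ hx
    obtain ⟨hw, hl'⟩ := Finset.mem_sigma.mp hx
    obtain ⟨hwA, hlam⟩ := Finset.mem_filter.mp hw
    exact (mem_pathFinset lam).mpr (cons_isPathIn lam hi hwA hlam ((mem_pathFinset lam).mp hl'))
  · rintro ⟨w₁, l₁⟩ hx₁ ⟨w₂, l₂⟩ hx₂ heq
    have heq' : i :: l₁ = i :: l₂ := heq
    obtain ⟨hw₁, hl₁⟩ := Finset.mem_sigma.mp hx₁
    obtain ⟨hw₂, hl₂⟩ := Finset.mem_sigma.mp hx₂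
    have hll : l₁ = l₂ := by injection heq'
    subst hll
    have hh₁ := ((mem_pathFinset lam).mp hl₁).2.2.2.1
    have hh₂ := ((mem_pathFinset lam).mp hl₂).2.2.2.1
    have : w₁ = w₂ := by
      rw [hh₁] at hh₂
      injection hh₂
    rw [this]
  · intro l hl
    obtain ⟨h1, h2, h3, h4, h5, h6⟩ := (mem_pathFinset lam).mp hl
    obtain ⟨t, rfl⟩ : ∃ t, l = i :: t := by
      cases l with
      | nil => exact absurd rfl h1
      | cons a t =>
        simp only [List.head?_cons, Option.some.injEq] at h4
        exact ⟨t, by rw [h4]⟩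
    obtain ⟨w, t', rfl⟩ : ∃ w t', t = w :: t' := by
      cases t with
      | nil =>
        exfalso
        simp only [List.getLast?_singleton, Option.some.injEq] at h5
        exact hne h5
      | cons w t' => exact ⟨w, t', rfl⟩
    unfold List.Chain' at h6; rw [List.isChain_cons_cons] at h6
    rw [List.nodup_cons] at h2
    have hwA : w ∈ A.erase i := by
      refine Finset.mem_erase.mpr ⟨?_, h3 w (by simp)⟩
      intro hwi
      exact h2.1 (hwi ▸ List.mem_cons_self (a := w) (l := t'))
    refine ⟨⟨w, w :: t'⟩, Finset.mem_sigma.mpr ⟨Finset.mem_filter.mpr ⟨hwA, h6.1⟩, ?_⟩, rfl⟩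
    refine (mem_pathFinset lam).mpr ⟨by simp, h2.2, ?_, rfl, ?_, h6.2⟩
    · intro x hx
      refine Finset.mem_erase.mpr ⟨?_, h3 x (List.mem_cons_of_mem i hx)⟩
      intro hxi
      exact h2.1 (hxi ▸ hx)
    · rw [List.getLast?_cons_cons] at h5
      exact h5
  · rintro ⟨w, l'⟩ hx
    obtain ⟨hw, hl'⟩ := Finset.mem_sigma.mp hx
    obtain ⟨hwA, hlam⟩ := Finset.mem_filter.mp hw
    have hpath := (mem_pathFinset lam).mp hl'
    obtain ⟨t, rfl⟩ : ∃ t, l' = w :: t := by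
      cases hpl : l' with
      | nil => exact absurd (hpl ▸ rfl) (hpl ▸ hpath.1)
      | cons a t =>
        have := hpath.2.2.2.1
        rw [hpl, List.head?_cons] at this
        simp only [Option.some.injEq] at this
        exact ⟨t, by rw [this]⟩
    have hsd : A \ (i :: w :: t).toFinset = (A.erase i) \ (w :: t).toFinset := by
      ext x
      simp only [List.toFinset_cons, Finset.mem_sdiff, Finset.mem_insert, Finset.mem_erase,
        not_or]
      tauto
    rw [pathWeight_cons_cons, hsd]
  
end Dev6
section Dev7
variable {n : ℕ} (r : Fin n → ℝ) (lam : Fin n → Fin n → ℝ)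

lemma godsil (hsym : ∀ j k, lam j k = lam k j) :
    ∀ (A : Finset (Fin n)) (i j : Fin n), i ≠ j → i ∈ A → j ∈ A →
    mu r lam (A.erase i) * mu r lam (A.erase j)
      - mu r lam A * mu r lam ((A.erase i).erase j) = pSum r lam A i j := by
  intro A
  induction A using Finset.strongInduction with
  | _ A ih =>
    intro i j hne hi hj
    have hjB : j ∈ A.erase i := Finset.mem_erase.mpr ⟨fun h => hne h.symm, hj⟩
    have hiAj : i ∈ A.erase j := Finset.mem_erase.mpr ⟨hne, hi⟩
    have hrecA := mu_recur r lam hsym hi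
    have hrecAj := mu_recur r lam hsym hiAj
    rw [Finset.erase_right_comm (s := A) (a := j) (b := i)] at hrecAj
    set B := A.erase i with hB
    set P := mu r lam B with hP
    set Q := mu r lam (B.erase j) with hQ
    have e1 : P * (∑ u ∈ B.erase j, C (lam i u) * mu r lam ((B.erase j).erase u))
        = ∑ u ∈ B.erase j, C (lam i u) * (P * mu r lam ((B.erase j).erase u)) := by
      rw [Finset.mul_sum]
      exact Finset.sum_congr rfl fun u hu => by ring
    have e2 : (∑ u ∈ B, C (lam i u) * mu r lam (B.erase u)) * Q
        = ∑ u ∈ B, C (lam i u) * (mu r lam (B.erase u) * Q) := by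
      rw [Finset.sum_mul]
      exact Finset.sum_congr rfl fun u hu => by ring
    have step1 : P * mu r lam (A.erase j) - mu r lam A * Q
        = (∑ u ∈ B.erase j, C (lam i u) * (P * mu r lam ((B.erase j).erase u)))
          - ∑ u ∈ B, C (lam i u) * (mu r lam (B.erase u) * Q) := by
      rw [hrecA, hrecAj]
      linear_combination e1 - e2
    have hsplit : (∑ u ∈ B, C (lam i u) * (mu r lam (B.erase u) * Q))
        = (∑ u ∈ B.erase j, C (lam i u) * (mu r lam (B.erase u) * Q))
          + C (lam i j) * (Q * Q) := by
      rw [← Finset.sum_erase_add B _ hjB]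
    have hterm : ∀ u ∈ B.erase j,
        C (lam i u) * (P * mu r lam ((B.erase j).erase u))
          - C (lam i u) * (mu r lam (B.erase u) * Q)
        = C (-lam i u) * pSum r lam B u j := by
      intro u hu
      obtain ⟨huj, huB⟩ := Finset.mem_erase.mp hu
      have hBA : B ⊂ A := Finset.erase_ssubset hi
      have hIH := ih B hBA u j huj huB hjB
      rw [Finset.erase_right_comm (s := B) (a := j) (b := u), map_neg]
      linear_combination (-(C (lam i u))) * hIH
    have hcomb : (∑ u ∈ B.erase j, C (lam i u) * (P * mu r lam ((B.erase j).erase u)))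
        - (∑ u ∈ B.erase j, C (lam i u) * (mu r lam (B.erase u) * Q))
        = ∑ u ∈ B.erase j, C (-lam i u) * pSum r lam B u j := by
      rw [← Finset.sum_sub_distrib]
      exact Finset.sum_congr rfl hterm
    have hlast : -(C (lam i j) * (Q * Q)) = C (-lam i j) * pSum r lam B j j := by
      rw [pSum_self r lam hjB, map_neg, ← hQ]
      ring
    have hmerge : (∑ u ∈ B.erase j, C (-lam i u) * pSum r lam B u j)
        + C (-lam i j) * pSum r lam B j j
        = ∑ u ∈ B, C (-lam i u) * pSum r lam B u j := Finset.sum_erase_add B _ hjB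
    rw [pSum_cons r lam hsym hne hi, ← hB]
    calc P * mu r lam (A.erase j) - mu r lam A * Q
        = (∑ u ∈ B.erase j, C (lam i u) * (P * mu r lam ((B.erase j).erase u)))
          - ((∑ u ∈ B.erase j, C (lam i u) * (mu r lam (B.erase u) * Q))
            + C (lam i j) * (Q * Q)) := by rw [step1, hsplit]
      _ = (∑ u ∈ B.erase j, C (-lam i u) * pSum r lam B u j)
          + C (-lam i j) * pSum r lam B j j := by
            linear_combination hcomb + hlast
      _ = ∑ u ∈ B, C (-lam i u) * pSum r lam B u j := hmerge

lemma wronskian_eq (hsym : ∀ j k, lam j k = lam k j) {A : Finset (Fin n)} {i : Fin n}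
    (hi : i ∈ A) :
    derivative (mu r lam A) * mu r lam (A.erase i)
      - mu r lam A * derivative (mu r lam (A.erase i))
      = ∑ v ∈ A, pSum r lam A v i := by
  rw [mu_derivative, mu_derivative, Finset.sum_mul, Finset.mul_sum]
  rw [← Finset.sum_erase_add A
    (fun v => mu r lam (A.erase v) * mu r lam (A.erase i)) hi]
  rw [← Finset.sum_erase_add A (fun v => pSum r lam A v i) hi]
  rw [pSum_self r lam hi]
  have hterm : ∀ v ∈ A.erase i,
      mu r lam (A.erase v) * mu r lam (A.erase i)
        - mu r lam A * mu r lam ((A.erase i).erase v) = pSum r lam A v i := by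
    intro v hv
    obtain ⟨hvi, hvA⟩ := Finset.mem_erase.mp hv
    rw [Finset.erase_right_comm (s := A) (a := i) (b := v)]
    exact godsil r lam hsym A v i hvi hvA hi
  have expand : ∑ v ∈ A.erase i,
      (mu r lam (A.erase v) * mu r lam (A.erase i)
        - mu r lam A * mu r lam ((A.erase i).erase v))
      = (∑ v ∈ A.erase i, mu r lam (A.erase v) * mu r lam (A.erase i))
        - ∑ v ∈ A.erase i, mu r lam A * mu r lam ((A.erase i).erase v) :=
    Finset.sum_sub_distrib _ _
  have key : ∑ v ∈ A.erase i,
      (mu r lam (A.erase v) * mu r lam (A.erase i)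
        - mu r lam A * mu r lam ((A.erase i).erase v))
      = ∑ v ∈ A.erase i, pSum r lam A v i :=
    Finset.sum_congr rfl hterm
  linear_combination key - expand

end Dev7
section Dev8
variable {n : ℕ} (r : Fin n → ℝ) (lam : Fin n → Fin n → ℝ)

lemma pow_dvd_deriv (p : Polynomial ℝ) (θ : ℝ) :
    (X - C θ) ^ (p.rootMultiplicity θ - 1) ∣ derivative p := by
  by_cases h : derivative p = 0
  · rw [h]; exact dvd_zero _
  · exact (le_rootMultiplicity_iff h).mp
      (rootMultiplicity_sub_one_le_derivative_rootMultiplicity p θ)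

lemma wron_lower (θ : ℝ) (p q : Polynomial ℝ)
    (hW : derivative p * q - p * derivative q ≠ 0) :
    p.rootMultiplicity θ + q.rootMultiplicity θ - 1
      ≤ (derivative p * q - p * derivative q).rootMultiplicity θ := by
  set a := p.rootMultiplicity θ with ha
  set b := q.rootMultiplicity θ with hb
  have d1 : (X - C θ) ^ (a - 1 + b) ∣ derivative p * q := by
    rw [pow_add]
    exact mul_dvd_mul (pow_dvd_deriv p θ) (pow_rootMultiplicity_dvd q θ)
  have d2 : (X - C θ) ^ (a + (b - 1)) ∣ p * derivative q := by
    rw [pow_add]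
    exact mul_dvd_mul (pow_rootMultiplicity_dvd p θ) (pow_dvd_deriv q θ)
  have d1' : (X - C θ) ^ (a + b - 1) ∣ derivative p * q :=
    dvd_trans (pow_dvd_pow _ (by omega)) d1
  have d2' : (X - C θ) ^ (a + b - 1) ∣ p * derivative q :=
    dvd_trans (pow_dvd_pow _ (by omega)) d2
  exact (le_rootMultiplicity_iff hW).mpr (dvd_sub d1' d2')

lemma sdiff_singleton_list {A : Finset (Fin n)} {v : Fin n} :
    A \ ([v] : List (Fin n)).toFinset = A.erase v := by
  rw [Finset.erase_eq]
  simp [Finset.erase_eq]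

lemma wronskian_facts (hsym : ∀ j k, lam j k = lam k j) (hnonpos : ∀ j k, lam j k ≤ 0)
    (θ : ℝ) {A : Finset (Fin n)} {i : Fin n} (hi : i ∈ A)
    {v0 : Fin n} {l0 : List (Fin n)} (hv0 : v0 ∈ A)
    (hl0 : IsPathIn lam A v0 i l0) :
    (derivative (mu r lam A) * mu r lam (A.erase i)
      - mu r lam A * derivative (mu r lam (A.erase i))) ≠ 0 ∧
    (derivative (mu r lam A) * mu r lam (A.erase i)
      - mu r lam A * derivative (mu r lam (A.erase i))).rootMultiplicity θ
      ≤ 2 * (mu r lam (A \ l0.toFinset)).rootMultiplicity θ := by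
  classical
  set S := A.sigma (fun v => pathFinset lam A v i) with hS
  have hWsum : derivative (mu r lam A) * mu r lam (A.erase i)
      - mu r lam A * derivative (mu r lam (A.erase i))
      = ∑ x ∈ S, C (pathWeight lam x.2) * mu r lam (A \ x.2.toFinset) ^ 2 := by
    rw [wronskian_eq r lam hsym hi, hS, Finset.sum_sigma]
    rfl
  have ht0 : (⟨v0, l0⟩ : Σ _ : Fin n, List (Fin n)) ∈ S :=
    Finset.mem_sigma.mpr ⟨hv0, (mem_pathFinset lam).mpr hl0⟩
  obtain ⟨h1, h2⟩ := sos_bound θ S (fun x => pathWeight lam x.2)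
    (fun x => mu r lam (A \ x.2.toFinset))
    (fun x hx => pathWeight_pos lam hnonpos
      ((mem_pathFinset lam).mp (Finset.mem_sigma.mp hx).2).2.2.2.2.2)
    (fun x hx => mu_ne_zero r lam _) ht0
  rw [hWsum]
  exact ⟨h1, h2⟩

lemma mult_add_le (hsym : ∀ j k, lam j k = lam k j) (hnonpos : ∀ j k, lam j k ≤ 0)
    (θ : ℝ) (A : Finset (Fin n)) (v : Fin n) :
    (mu r lam A).rootMultiplicity θ ≤ (mu r lam (A.erase v)).rootMultiplicity θ + 1 := by
  by_cases hv : v ∈ A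
  · have hl0 : IsPathIn lam A v v [v] := (isPathIn_self lam hv).mpr rfl
    obtain ⟨hW0, hWle⟩ := wronskian_facts r lam hsym hnonpos θ hv hv hl0
    have hlow := wron_lower θ (mu r lam A) (mu r lam (A.erase v)) hW0
    rw [sdiff_singleton_list] at hWle
    omega
  · rw [Finset.erase_eq_self.mpr hv]
    omega

lemma mult_drop_le (hsym : ∀ j k, lam j k = lam k j) (hnonpos : ∀ j k, lam j k ≤ 0)
    (θ : ℝ) (A : Finset (Fin n)) (v : Fin n) :
    (mu r lam (A.erase v)).rootMultiplicity θ ≤ (mu r lam A).rootMultiplicity θ + 1 := by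
  by_cases hv : v ∈ A
  · set b := (mu r lam (A.erase v)).rootMultiplicity θ with hb
    have hdvd : (X - C θ) ^ (b - 1) ∣ mu r lam A := by
      rw [mu_recur r lam hsym hv]
      apply dvd_add
      · exact Dvd.dvd.mul_left
          (dvd_trans (pow_dvd_pow _ (Nat.sub_le b 1))
            (pow_rootMultiplicity_dvd _ θ)) _
      · refine Finset.dvd_sum fun u hu => ?_
        apply Dvd.dvd.mul_left
        have h1 := mult_add_le r lam hsym hnonpos θ (A.erase v) u
        refine dvd_trans (pow_dvd_pow _ ?_) (pow_rootMultiplicity_dvd _ θ)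
        omega
    have := (le_rootMultiplicity_iff (mu_ne_zero r lam A)).mpr hdvd
    omega
  · rw [Finset.erase_eq_self.mpr hv]
    omega

end Dev8
section Dev9
variable {n : ℕ} (r : Fin n → ℝ) (lam : Fin n → Fin n → ℝ)

lemma star_lemma (hsym : ∀ j k, lam j k = lam k j) (hnonpos : ∀ j k, lam j k ≤ 0)
    (θ : ℝ) {i j : Fin n} (hij : i ≠ j) {l : List (Fin n)}
    (hl : IsPathIn lam Finset.univ i j l)
    (hlt : (mu r lam (Finset.univ \ l.toFinset)).rootMultiplicity θ + 1
      ≤ (mu r lam ((Finset.univ.erase j).erase i)).rootMultiplicity θ) :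
    (mu r lam ((Finset.univ.erase j).erase i)).rootMultiplicity θ
      = (mu r lam (Finset.univ.erase j)).rootMultiplicity θ + 1 := by
  classical
  set H := Finset.univ.erase j with hH
  have hiH : i ∈ H := Finset.mem_erase.mpr ⟨hij, Finset.mem_univ i⟩
  -- reverse path: from j to i
  obtain ⟨h1, h2, h3, h4, h5, h6⟩ := isPathIn_reverse lam hsym hl
  obtain ⟨t, hLr⟩ : ∃ t, l.reverse = j :: t := by
    cases hrev : l.reverse with
    | nil => exact absurd hrev (by simpa using h1)
    | cons a t =>
      rw [hrev, List.head?_cons] at h4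
      simp only [Option.some.injEq] at h4
      exact ⟨t, by rw [← h4]⟩
  rw [hLr] at h1 h2 h3 h4 h5 h6
  obtain ⟨w, t', rfl⟩ : ∃ w t', t = w :: t' := by
    cases t with
    | nil =>
      exfalso
      simp only [List.getLast?_singleton, Option.some.injEq] at h5
      exact hij h5.symm
    | cons w t' => exact ⟨w, t', rfl⟩
  unfold List.Chain' at h6; rw [List.isChain_cons_cons] at h6
  rw [List.nodup_cons] at h2
  -- the truncated reversed path lives in H
  have hwH : w ∈ H := by
    refine Finset.mem_erase.mpr ⟨?_, Finset.mem_univ w⟩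
    intro hwj
    exact h2.1 (hwj ▸ List.mem_cons_self (a := w) (l := t'))
  have hpathH : IsPathIn lam H w i (w :: t') := by
    refine ⟨by simp, h2.2, ?_, rfl, ?_, h6.2⟩
    · intro x hx
      refine Finset.mem_erase.mpr ⟨?_, Finset.mem_univ x⟩
      intro hxj
      exact h2.1 (hxj ▸ hx)
    · rw [List.getLast?_cons_cons] at h5
      exact h5
  -- identify vertex sets
  have hsd : H \ (w :: t').toFinset = Finset.univ \ l.toFinset := by
    have hlf : l.toFinset = (j :: w :: t').toFinset := by
      rw [← List.toFinset_reverse, hLr]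
    rw [hlf]
    ext x
    simp only [List.toFinset_cons, Finset.mem_sdiff, Finset.mem_insert, Finset.mem_erase,
      not_or, hH]
    constructor
    · rintro ⟨⟨hxj, _⟩, hxw, hxt⟩
      exact ⟨Finset.mem_univ x, hxj, hxw, by simpa using hxt⟩
    · rintro ⟨_, hxj, hxw, hxt⟩
      exact ⟨⟨hxj, Finset.mem_univ x⟩, hxw, by simpa using hxt⟩
  obtain ⟨hW0, hWle⟩ := wronskian_facts r lam hsym hnonpos θ hiH hwH hpathH
  rw [hsd] at hWle
  have hlow := wron_lower θ (mu r lam H) (mu r lam (H.erase i)) hW0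
  have hdrop := mult_drop_le r lam hsym hnonpos θ H i
  omega

end Dev9

/-- if the rational function `λ_{i∼j}` has a pole at `θ`, then
`i ∈ ∞_{θ,G∖j}` and `j ∈ ∞_{θ,G∖i}`, i.e. `m_θ(G∖{i,j}) = m_θ(G∖j) + 1` and
`m_θ(G∖{i,j}) = m_θ(G∖i) + 1`. -/
theorem stmt_11 (n : ℕ) (hn : 0 < n) (r : Fin n → ℝ) (lam : Fin n → Fin n → ℝ)
    (hsym : ∀ j k, lam j k = lam k j) (hnonpos : ∀ j k, lam j k ≤ 0)
    (hdiag : ∀ i, lam i i = 0) (θ : ℝ) (i j : Fin n) (hij : i ≠ j)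
    (hpole : (lamSim r lam i j (Finset.univ : Finset (Fin n))).denom.eval θ = 0) :
    (mu r lam ((Finset.univ.erase j).erase i)).rootMultiplicity θ =
        (mu r lam (Finset.univ.erase j)).rootMultiplicity θ + 1 ∧
    (mu r lam ((Finset.univ.erase i).erase j)).rootMultiplicity θ =
        (mu r lam (Finset.univ.erase i)).rootMultiplicity θ + 1 := by
  classical
  rw [lamSim_eq] at hpole
  obtain ⟨hP0, hPlt⟩ := pole_lemma θ (pSum r lam Finset.univ i j)
    ((mu r lam ((Finset.univ.erase i).erase j)) ^ 2)
    (pow_ne_zero 2 (mu_ne_zero r lam _)) hpole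
  have hD2 : ((mu r lam ((Finset.univ.erase i).erase j)) ^ 2).rootMultiplicity θ
      = 2 * (mu r lam ((Finset.univ.erase i).erase j)).rootMultiplicity θ := by
    rw [sq, rootMultiplicity_mul (mul_ne_zero (mu_ne_zero r lam _) (mu_ne_zero r lam _))]
    ring
  rw [hD2] at hPlt
  have hex : ∃ l ∈ pathFinset lam Finset.univ i j,
      (mu r lam (Finset.univ \ l.toFinset)).rootMultiplicity θ + 1
        ≤ (mu r lam ((Finset.univ.erase i).erase j)).rootMultiplicity θ := by
    by_contra hcon
    push_neg at hcon
    have hdvd : (X - C θ) ^ (2 * (mu r lam ((Finset.univ.erase i).erase j)).rootMultiplicity θ)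
        ∣ pSum r lam Finset.univ i j := by
      rw [pSum]
      refine Finset.dvd_sum fun l hlmem => ?_
      have h1 := hcon l hlmem
      have h2 : (mu r lam ((Finset.univ.erase i).erase j)).rootMultiplicity θ
          ≤ (mu r lam (Finset.univ \ l.toFinset)).rootMultiplicity θ := by omega
      apply Dvd.dvd.mul_left
      rw [two_mul, pow_add, sq]
      exact mul_dvd_mul
        (dvd_trans (pow_dvd_pow _ h2) (pow_rootMultiplicity_dvd _ θ))
        (dvd_trans (pow_dvd_pow _ h2) (pow_rootMultiplicity_dvd _ θ))
    have := (le_rootMultiplicity_iff hP0).mpr hdvd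
    omega
  obtain ⟨l, hlS, hlm⟩ := hex
  have hpath := (mem_pathFinset lam).mp hlS
  constructor
  · refine star_lemma r lam hsym hnonpos θ hij hpath ?_
    rw [Finset.erase_right_comm (s := Finset.univ) (a := j) (b := i)]
    exact hlm
  · have hrev := isPathIn_reverse lam hsym hpath
    refine star_lemma r lam hsym hnonpos θ (Ne.symm hij) hrev ?_
    rw [List.toFinset_reverse]
    exact hlm
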